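/- Let C be an augmented ℤ_p-chain complex and φ_j a resolution of 1 for C. Let n ≥ 1 and suppose the degree-n class of the resolution vanishes in the following sense: if n is even, sφ_n = δ(sψ) for some cochain ψ ∈ C^{n−1}; if n is odd, dφ_n = δ(dψ) for some cochain ψ ∈ C^{n−1}. Then there is a resolution φ̄_j of 1 for C with φ̄_j = φ_j for all j < n−1, with φ̄_{n−1} = φ_{n−1} − sψ if n is even and φ̄_{n−1} = φ_{n−1} − dψ if n is odd, and with φ̄_j = 0 for all j ≥ n. -/

import Mathlib

open scoped TensorProduct

/-- An augmented `ℤ_p`-chain complex: a `ℤ_p`-chain complex indexed by degrees `≥ −1`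
whose degree-`(−1)` chain group is infinite cyclic with a chosen generator `∅` fixed by
`t`.  Here `C n` is the chain group in degree `n − 1` (so `C 0` is the augmentation
degree, identified with `ℤ` by `base`, the generator `∅` corresponding to `1`). -/
structure AugComplex (p : ℕ) where
  C : ℕ → Type
  [acg : ∀ n, AddCommGroup (C n)]
  bd : ∀ n, C (n + 1) →+ C n
  bd_bd : ∀ n x, bd n (bd (n + 1) x) = 0
  t : ∀ n, C n →+ C n
  t_bd : ∀ n x, t n (bd n x) = bd n (t (n + 1) x)
  t_pow : ∀ n x, (⇑(t n))^[p] x = x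
  base : C 0 ≃+ ℤ
  t_base : ∀ x, t 0 x = x

attribute [instance] AugComplex.acg

namespace AugComplex

variable {p : ℕ} (X : AugComplex p)

/-- cochains: `Co n = Hom(C n, ℤ)` is the group of cochains in degree `n − 1`. -/
abbrev Co (n : ℕ) := X.C n →+ ℤ

/-- the chain map `t^k` -/
def tpow (n : ℕ) : ℕ → (X.C n →+ X.C n)
  | 0 => AddMonoidHom.id _
  | k + 1 => (X.t n).comp (tpow n k)

/-- `s = 1 + t + ⋯ + t^{p−1}` on chains -/
def sCh (n : ℕ) : X.C n →+ X.C n := ∑ k ∈ Finset.range p, X.tpow n k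

/-- `d = 1 − t` on chains -/
def dCh (n : ℕ) : X.C n →+ X.C n := AddMonoidHom.id _ - X.t n

/-- the coboundary `δφ = φ ∘ ∂` -/
def cb (n : ℕ) : X.Co n →+ X.Co (n + 1) where
  toFun φ := φ.comp (X.bd n)
  map_zero' := by ext x; simp
  map_add' _ _ := by ext x; simp

/-- the cochain map `t^k` -/
def tCo (n k : ℕ) : X.Co n →+ X.Co n where
  toFun φ := φ.comp (X.tpow n k)
  map_zero' := by ext x; simp
  map_add' _ _ := by ext x; simp

/-- `s = 1 + t + ⋯ + t^{p−1}` on cochains -/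
def sCo (n : ℕ) : X.Co n →+ X.Co n where
  toFun φ := φ.comp (X.sCh n)
  map_zero' := by ext x; simp
  map_add' _ _ := by ext x; simp

/-- `d = 1 − t` on cochains -/
def dCo (n : ℕ) : X.Co n →+ X.Co n where
  toFun φ := φ.comp (X.dCh n)
  map_zero' := by ext x; simp
  map_add' _ _ := by ext x; simp

/-- the cochain `1_C = δ(∅*) ∈ C^0` -/
def one : X.Co 1 := X.base.toAddMonoidHom.comp (X.bd 0)

/-- `φ_0, φ_1, φ_2, …` is a resolution of `1` for `X`:  `sφ_0 = 1`, `δφ_j = dφ_{j+1}`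
for even `j`, and `δφ_j = sφ_{j+1}` for odd `j`.  (Here `φ j : Co (j+1)` is the
cochain in degree `j`.) -/
def IsRes (φ : ∀ j : ℕ, X.Co (j + 1)) : Prop :=
  X.sCo 1 (φ 0) = X.one ∧
  (∀ j, Even j → X.cb (j + 1) (φ j) = X.dCo (j + 2) (φ (j + 1))) ∧
  (∀ j, Odd j → X.cb (j + 1) (φ j) = X.sCo (j + 2) (φ (j + 1)))

/-- transport of cochains along an equality of degrees -/
def castCoX {m n : ℕ} (h : m = n) (f : X.Co m) : X.Co n := h ▸ f

end AugComplex

open AugComplex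

namespace AugComplex

variable {p : ℕ} (X : AugComplex p)

theorem tpow_apply' (n k : ℕ) (x : X.C n) : X.tpow n k x = (⇑(X.t n))^[k] x := by
  induction k with
  | zero => rfl
  | succ k ih => simp [tpow, ih, Function.iterate_succ_apply']

theorem t_tpow' (n k : ℕ) (x : X.C n) : X.tpow n k (X.t n x) = X.t n (X.tpow n k x) := by
  induction k with
  | zero => rfl
  | succ k ih => simp [tpow, ih]

theorem sCh_apply' (n : ℕ) (x : X.C n) :
    X.sCh n x = ∑ k ∈ Finset.range p, X.tpow n k x := by
  simp [sCh]

theorem dCh_sCh' (n : ℕ) (x : X.C n) : X.dCh n (X.sCh n x) = 0 := by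
  have h1 : X.dCh n (X.sCh n x)
      = ∑ k ∈ Finset.range p, (X.tpow n k x - X.tpow n (k + 1) x) := by
    simp only [dCh, AddMonoidHom.sub_apply, AddMonoidHom.id_apply, sCh_apply', map_sum,
      Finset.sum_sub_distrib]
    rfl
  rw [h1, Finset.sum_range_sub']
  simp [tpow_apply', X.t_pow n x, tpow]

theorem sCh_dCh' (n : ℕ) (x : X.C n) : X.sCh n (X.dCh n x) = 0 := by
  have h1 : X.sCh n (X.dCh n x)
      = ∑ k ∈ Finset.range p, (X.tpow n k x - X.tpow n (k + 1) x) := by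
    simp only [dCh, AddMonoidHom.sub_apply, AddMonoidHom.id_apply, map_sub, sCh_apply',
      Finset.sum_sub_distrib, t_tpow']
    rfl
  rw [h1, Finset.sum_range_sub']
  simp [tpow_apply', X.t_pow n x, tpow]

theorem dCo_sCo' (n : ℕ) (f : X.Co n) : X.dCo n (X.sCo n f) = 0 := by
  ext x
  simp [dCo, sCo, sCh_dCh']

theorem sCo_dCo' (n : ℕ) (f : X.Co n) : X.sCo n (X.dCo n f) = 0 := by
  ext x
  simp [dCo, sCo, dCh_sCh']

/-- the shortened resolution -/
def bar (φ : ∀ j, X.Co (j + 1)) (m : ℕ) (θ : X.Co (m + 1)) : ∀ j, X.Co (j + 1) :=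
  fun j => if h : m + 1 = j + 1 then X.castCoX h (φ m - θ) else if j < m then φ j else 0

theorem bar_lt (φ : ∀ j, X.Co (j + 1)) (m : ℕ) (θ : X.Co (m + 1)) (j : ℕ) (hj : j < m) :
    X.bar φ m θ j = φ j := by
  simp only [bar]
  rw [dif_neg (by omega), if_pos hj]

theorem bar_self (φ : ∀ j, X.Co (j + 1)) (m : ℕ) (θ : X.Co (m + 1)) :
    X.bar φ m θ m = φ m - θ := by
  simp only [bar]
  rfl

theorem bar_gt (φ : ∀ j, X.Co (j + 1)) (m : ℕ) (θ : X.Co (m + 1)) (j : ℕ) (hj : m < j) :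
    X.bar φ m θ j = 0 := by
  simp only [bar]
  rw [dif_neg (by omega), if_neg (by omega)]

end AugComplex


/-- **Shortening of a resolution.**
Let `C` be an augmented `ℤ_p`-chain complex and `φ_j` a resolution of `1` for `C`.
Let `n ≥ 1` and suppose the degree-`n` class of the resolution vanishes: if `n` is even,
`sφ_n = δ(sψ)` for some cochain `ψ ∈ C^{n−1}`, and if `n` is odd, `dφ_n = δ(dψ)` for
some cochain `ψ ∈ C^{n−1}`.  Then there is a resolution `φ̄_j` of `1` for `C` with
`φ̄_j = φ_j` for `j < n−1`, with `φ̄_{n−1} = φ_{n−1} − sψ` if `n` is even and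
`φ̄_{n−1} = φ_{n−1} − dψ` if `n` is odd, and with `φ̄_j = 0` for all `j ≥ n`. -/
theorem shortening_of_resolution
    (p : ℕ) (hp : p.Prime) (X : AugComplex p)
    (φ : ∀ j, X.Co (j + 1)) (hres : X.IsRes φ)
    (n : ℕ) (hn : 1 ≤ n) (ψ : X.Co n)
    (he : Even n → X.sCo (n + 1) (φ n) = X.cb n (X.sCo n ψ))
    (ho : Odd n → X.dCo (n + 1) (φ n) = X.cb n (X.dCo n ψ)) :
    ∃ φbar : ∀ j, X.Co (j + 1),
      X.IsRes φbar ∧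
      (∀ j, j < n - 1 → φbar j = φ j) ∧
      (Even n → φbar (n - 1) = φ (n - 1) - X.castCoX (by omega) (X.sCo n ψ)) ∧
      (Odd n → φbar (n - 1) = φ (n - 1) - X.castCoX (by omega) (X.dCo n ψ)) ∧
      (∀ j, n ≤ j → φbar j = 0) := by
  obtain ⟨m, rfl⟩ : ∃ m, n = m + 1 := ⟨n - 1, by omega⟩
  rcases Nat.even_or_odd (m + 1) with hpar | hpar
  · -- n = m + 1 even, so m is odd
    have hm' : ¬ Even m := Nat.even_add_one.mp hpar
    have hm1 : 1 ≤ m := by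
      rcases Nat.eq_zero_or_pos m with h | h
      · exact absurd (h ▸ Even.zero) hm'
      · exact h
    refine ⟨X.bar φ m (X.sCo (m + 1) ψ), ⟨?_, ?_, ?_⟩, ?_, ?_, ?_, ?_⟩
    · rw [X.bar_lt _ _ _ _ hm1]
      exact hres.1
    · intro j hj
      rcases lt_trichotomy (j + 1) m with h | h | h
      · rw [X.bar_lt _ _ _ _ (by omega), X.bar_lt _ _ _ _ h]
        exact hres.2.1 j hj
      · subst h
        rw [X.bar_lt _ _ _ _ (by omega), X.bar_self, map_sub, X.dCo_sCo', sub_zero]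
        exact hres.2.1 j hj
      · by_cases hjm : j = m
        · exact absurd (hjm ▸ hj) hm'
        · rw [X.bar_gt _ _ _ _ (by omega), X.bar_gt _ _ _ _ (by omega), map_zero, map_zero]
    · intro j hj
      rcases lt_trichotomy (j + 1) m with h | h | h
      · rw [X.bar_lt _ _ _ _ (by omega), X.bar_lt _ _ _ _ h]
        exact hres.2.2 j hj
      · exact absurd (h ▸ hj.add_one) hm'
      · by_cases hjm : j = m
        · subst hjm
          rw [X.bar_self, X.bar_gt _ _ _ _ (by omega), map_zero, map_sub,
            hres.2.2 j hj, he hpar, sub_self]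
        · rw [X.bar_gt _ _ _ _ (by omega), X.bar_gt _ _ _ _ (by omega), map_zero, map_zero]
    · intro j hj
      exact X.bar_lt _ _ _ _ (by omega)
    · intro _
      exact X.bar_self _ _ _
    · intro hodd
      exact absurd hpar (Nat.not_even_iff_odd.mpr hodd)
    · intro j hj
      exact X.bar_gt _ _ _ _ (by omega)
  · -- n = m + 1 odd, so m is even
    have hm : Even m := by
      by_contra h
      exact Nat.not_even_iff_odd.mpr hpar (Nat.even_add_one.mpr h)
    refine ⟨X.bar φ m (X.dCo (m + 1) ψ), ⟨?_, ?_, ?_⟩, ?_, ?_, ?_, ?_⟩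
    · by_cases hm0 : m = 0
      · subst hm0
        rw [X.bar_self, map_sub, X.sCo_dCo', sub_zero]
        exact hres.1
      · rw [X.bar_lt _ _ _ _ (by omega)]
        exact hres.1
    · intro j hj
      rcases lt_trichotomy (j + 1) m with h | h | h
      · rw [X.bar_lt _ _ _ _ (by omega), X.bar_lt _ _ _ _ h]
        exact hres.2.1 j hj
      · exact absurd (h ▸ hj.add_one) (Nat.not_odd_iff_even.mpr hm)
      · by_cases hjm : j = m
        · subst hjm
          rw [X.bar_self, X.bar_gt _ _ _ _ (by omega), map_zero, map_sub,
            hres.2.1 j hj, ho hpar, sub_self]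
        · rw [X.bar_gt _ _ _ _ (by omega), X.bar_gt _ _ _ _ (by omega), map_zero, map_zero]
    · intro j hj
      rcases lt_trichotomy (j + 1) m with h | h | h
      · rw [X.bar_lt _ _ _ _ (by omega), X.bar_lt _ _ _ _ h]
        exact hres.2.2 j hj
      · subst h
        rw [X.bar_lt _ _ _ _ (by omega), X.bar_self, map_sub, X.sCo_dCo', sub_zero]
        exact hres.2.2 j hj
      · by_cases hjm : j = m
        · exact absurd (hjm ▸ hj) (Nat.not_odd_iff_even.mpr hm)
        · rw [X.bar_gt _ _ _ _ (by omega), X.bar_gt _ _ _ _ (by omega), map_zero, map_zero]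
    · intro j hj
      exact X.bar_lt _ _ _ _ (by omega)
    · intro hev
      exact absurd hpar (Nat.not_odd_iff_even.mpr hev)
    · intro _
      exact X.bar_self _ _ _
    · intro j hj
      exact X.bar_gt _ _ _ _ (by omega)
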